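/- The generating function Φ(x,y) = Σ_{[T₁,T₂]} x^{m(T₁)} y^{|T₁|}, summed over intervals of the Tamari lattice where |T₁| is the number of nodes and m(T₁) is the number of nodes on the leftmost branch of the smaller tree T₁, satisfies the functional equation Φ(x,y) = 1 + x·y·Φ(x,y)·(xΦ(x,y) − Φ(1,y))/(x−1). -/

import Mathlib

/-- Unlabelled binary trees. -/
inductive Tree0 where
  | leaf : Tree0
  | node : Tree0 → Tree0 → Tree0
deriving DecidableEq

namespace Tree0

/-- Number of nodes. -/
def size : Tree0 → ℕ
  | leaf => 0
  | node l r => size l + size r + 1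

/-- Number of nodes on the leftmost branch. -/
def leftBranch : Tree0 → ℕ
  | leaf => 0
  | node l _ => leftBranch l + 1

/-- One right rotation somewhere in the tree: `y(x(A,B),C) ↦ x(A,y(B,C))`. -/
inductive Rot : Tree0 → Tree0 → Prop
  | root (A B C : Tree0) : Rot (node (node A B) C) (node A (node B C))
  | left {l l' : Tree0} (r : Tree0) : Rot l l' → Rot (node l r) (node l' r)
  | right (l : Tree0) {r r' : Tree0} : Rot r r' → Rot (node l r) (node l r')

/-- The Tamari order: transitive closure of right rotation. -/
def tamariLE : Tree0 → Tree0 → Prop := Relation.ReflTransGen Rot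

end Tree0

open Polynomial

/-- The divided-difference operator `Δ(g)(x) = (x·g(x) − g(1))/(x−1)`, an exact
division since the numerator vanishes at `x = 1` (`X - C 1` is monic). -/
noncomputable def deltaPoly (p : Polynomial ℤ) : Polynomial ℤ :=
  (Polynomial.X * p - Polynomial.C (p.eval 1)) /ₘ (Polynomial.X - Polynomial.C 1)

/-- `Δ` applied coefficientwise in `y` to a series in `y` with coefficients in `ℤ[x]`. -/
noncomputable def deltaS (F : PowerSeries (Polynomial ℤ)) : PowerSeries (Polynomial ℤ) :=
  PowerSeries.mk fun n => deltaPoly (PowerSeries.coeff n F)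

namespace Tree0

lemma size_rot {a b : Tree0} (h : Rot a b) : a.size = b.size := by
  induction h with
  | root A B C => simp [size]; omega
  | left r _ ih => simp [size, ih]
  | right l _ ih => simp [size, ih]

lemma size_le {a b : Tree0} (h : tamariLE a b) : a.size = b.size := by
  induction h with
  | refl => rfl
  | tail _ hbc ih => exact ih.trans (size_rot hbc)

lemma le_refl (a : Tree0) : tamariLE a a := Relation.ReflTransGen.refl

lemma le_trans {a b c : Tree0} (h : tamariLE a b) (h' : tamariLE b c) : tamariLE a c :=
  Relation.ReflTransGen.trans h h'

lemma le_node_left {l l' : Tree0} (r : Tree0) (h : tamariLE l l') :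
    tamariLE (node l r) (node l' r) :=
  Relation.ReflTransGen.lift (fun x => node x r) (fun _ _ h => Rot.left r h) _ _ h

lemma le_node_right (l : Tree0) {r r' : Tree0} (h : tamariLE r r') :
    tamariLE (node l r) (node l r') :=
  Relation.ReflTransGen.lift (fun x => node l x) (fun _ _ h => Rot.right l h) _ _ h

lemma le_node {l l' r r' : Tree0} (h : tamariLE l l') (h' : tamariLE r r') :
    tamariLE (node l r) (node l' r') :=
  le_trans (le_node_left r h) (le_node_right l' h')

/-- Insert a node with left child `P` at depth `k` on the left branch of `Q`. -/
def ins : ℕ → Tree0 → Tree0 → Tree0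
  | 0, P, Q => node P Q
  | _ + 1, P, leaf => node P leaf
  | k + 1, P, node l r => node (ins k P l) r

lemma size_ins (k : ℕ) (P Q : Tree0) : (ins k P Q).size = P.size + Q.size + 1 := by
  induction k generalizing Q with
  | zero => rfl
  | succ k ih => cases Q with
    | leaf => rfl
    | node l r => simp [ins, size, ih]; omega

lemma lb_ins {k : ℕ} (P : Tree0) {Q : Tree0} (hk : k ≤ Q.leftBranch) :
    (ins k P Q).leftBranch = P.leftBranch + k + 1 := by
  induction k generalizing Q with
  | zero => rfl
  | succ k ih => cases Q with
    | leaf => simp [leftBranch] at hk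
    | node l r =>
      simp only [leftBranch, Nat.add_le_add_iff_right] at hk
      simp [ins, leftBranch, ih hk]; omega

lemma ins_le_node {k : ℕ} (P : Tree0) {Q : Tree0} (hk : k ≤ Q.leftBranch) :
    tamariLE (ins k P Q) (node P Q) := by
  induction k generalizing Q with
  | zero => exact le_refl _
  | succ k ih => cases Q with
    | leaf => simp [leftBranch] at hk
    | node l r =>
      simp only [leftBranch, Nat.add_le_add_iff_right] at hk
      exact le_trans (le_node_left r (ih hk))
        (Relation.ReflTransGen.single (Rot.root P l r))

lemma ins_le {k : ℕ} {P Q A B : Tree0} (hk : k ≤ Q.leftBranch)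
    (hP : tamariLE P A) (hQ : tamariLE Q B) : tamariLE (ins k P Q) (node A B) :=
  le_trans (ins_le_node P hk) (le_node hP hQ)


lemma rot_ins {T : Tree0} {k : ℕ} {P Q : Tree0} (hk : k ≤ Q.leftBranch)
    (h : Rot T (ins k P Q)) :
    ∃ k' P' Q', k' ≤ Q'.leftBranch ∧ T = ins k' P' Q' ∧ tamariLE P' P ∧ tamariLE Q' Q := by
  induction k generalizing T Q with
  | zero =>
    -- ins 0 P Q = node P Q
    cases h with
    | root A B C =>
      exact ⟨1, P, node B C, by simp [leftBranch], rfl, le_refl _, le_refl _⟩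
    | left r hl =>
      exact ⟨0, _, Q, Nat.zero_le _, rfl, Relation.ReflTransGen.single hl, le_refl _⟩
    | right l hr =>
      exact ⟨0, P, _, Nat.zero_le _, rfl, le_refl _, Relation.ReflTransGen.single hr⟩
  | succ k ih =>
    cases Q with
    | leaf => simp [leftBranch] at hk
    | node Ql Qr =>
      simp only [leftBranch, Nat.add_le_add_iff_right] at hk
      -- ins (k+1) P (node Ql Qr) = node (ins k P Ql) Qr
      cases h with
      | root A B C =>
        refine ⟨k + 2, P, node (node Ql B) C, ?_, rfl, le_refl _,
          Relation.ReflTransGen.single (Rot.root Ql B C)⟩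
        simp [leftBranch]; omega
      | left r hl =>
        obtain ⟨k', P', Ql', hk', rfl, hP, hQ⟩ := ih hk hl
        exact ⟨k' + 1, P', node Ql' Qr, by simpa [leftBranch] using hk', rfl, hP,
          le_node_left Qr hQ⟩
      | right l hr =>
        exact ⟨k + 1, P, node Ql _, by simpa [leftBranch] using hk, rfl, le_refl _,
          le_node_right Ql (Relation.ReflTransGen.single hr)⟩

lemma le_ins {T U : Tree0} (h : tamariLE T U) :
    ∀ {k : ℕ} {P Q : Tree0}, k ≤ Q.leftBranch → U = ins k P Q →
    ∃ k' P' Q', k' ≤ Q'.leftBranch ∧ T = ins k' P' Q' ∧ tamariLE P' P ∧ tamariLE Q' Q := by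
  induction h using Relation.ReflTransGen.head_induction_on with
  | refl => exact fun hk hU => ⟨_, _, _, hk, hU, le_refl _, le_refl _⟩
  | head hTT' _ ih =>
    intro k P Q hk hU
    obtain ⟨k₁, P₁, Q₁, hk₁, rfl, hP₁, hQ₁⟩ := ih hk hU
    obtain ⟨k₂, P₂, Q₂, hk₂, hT, hP₂, hQ₂⟩ := rot_ins hk₁ hTT'
    exact ⟨k₂, P₂, Q₂, hk₂, hT, le_trans hP₂ hP₁, le_trans hQ₂ hQ₁⟩

lemma decomp {T A B : Tree0} (h : tamariLE T (node A B)) :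
    ∃ k P Q, k ≤ Q.leftBranch ∧ T = ins k P Q ∧ tamariLE P A ∧ tamariLE Q B :=
  le_ins h (Nat.zero_le _) rfl

lemma ins_inj : ∀ {k k' : ℕ} {P P' Q Q' : Tree0}, k ≤ Q.leftBranch → k' ≤ Q'.leftBranch →
    P.size = P'.size → ins k P Q = ins k' P' Q' → k = k' ∧ P = P' ∧ Q = Q' := by
  intro k
  induction k with
  | zero =>
    intro k' P P' Q Q' _ hk' hs he
    cases k' with
    | zero => simp [ins] at he; exact ⟨rfl, he.1, he.2⟩
    | succ k' =>
      cases Q' with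
      | leaf => simp [leftBranch] at hk'
      | node l r =>
        simp only [ins, node.injEq] at he
        rw [he.1, size_ins] at hs; omega
  | succ k ih =>
    intro k' P P' Q Q' hk hk' hs he
    cases Q with
    | leaf => simp [leftBranch] at hk
    | node Ql Qr =>
      simp only [leftBranch, Nat.add_le_add_iff_right] at hk
      cases k' with
      | zero =>
        simp only [ins, node.injEq] at he
        rw [← he.1, size_ins] at hs; omega
      | succ k' =>
        cases Q' with
        | leaf => simp [leftBranch] at hk'
        | node Ql' Qr' =>
          simp only [leftBranch, Nat.add_le_add_iff_right] at hk'
          simp only [ins, node.injEq] at he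
          obtain ⟨h1, h2, h3⟩ := ih hk hk' hs he.1
          exact ⟨by omega, h2, by rw [h3, he.2]⟩

end Tree0

namespace Tree0

lemma finite_size_le (n : ℕ) : {T : Tree0 | T.size ≤ n}.Finite := by
  induction n with
  | zero =>
    apply Set.Finite.subset (Set.finite_singleton leaf)
    rintro (_ | ⟨l, r⟩) hT
    · exact rfl
    · simp [size] at hT
  | succ n ih =>
    apply Set.Finite.subset (((ih.prod ih).image (fun p => node p.1 p.2)).insert leaf)
    rintro (_ | ⟨l, r⟩) hT
    · simp
    · simp only [Set.mem_setOf_eq, size] at hT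
      exact Set.mem_insert_iff.2 (Or.inr ⟨(l, r), ⟨by simp; omega, by simp; omega⟩, rfl⟩)

lemma finite_S (n : ℕ) : {p : Tree0 × Tree0 | tamariLE p.1 p.2 ∧ p.1.size = n}.Finite := by
  apply Set.Finite.subset ((finite_size_le n).prod (finite_size_le n))
  rintro ⟨a, b⟩ ⟨h1, h2⟩
  exact ⟨by simp [h2], by simp [← size_le h1, h2]⟩

/-- Finset of Tamari intervals whose lower tree has `n` nodes. -/
noncomputable def F (n : ℕ) : Finset (Tree0 × Tree0) := (finite_S n).toFinset

lemma mem_F {n : ℕ} {p : Tree0 × Tree0} : p ∈ F n ↔ tamariLE p.1 p.2 ∧ p.1.size = n := by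
  simp [F, Set.Finite.mem_toFinset]

end Tree0

namespace Tree0
open Polynomial Finset

lemma sum_decomp (n : ℕ) :
    ∑ p ∈ F (n + 1), (X : Polynomial ℤ) ^ p.1.leftBranch
      = ∑ ij ∈ Finset.HasAntidiagonal.antidiagonal n, ∑ p ∈ F ij.1, ∑ q ∈ F ij.2,
          ∑ k ∈ Finset.range (q.1.leftBranch + 1), (X : Polynomial ℤ) ^ (p.1.leftBranch + k + 1) := by
  rw [show (∑ ij ∈ Finset.HasAntidiagonal.antidiagonal n, ∑ p ∈ F ij.1, ∑ q ∈ F ij.2,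
          ∑ k ∈ Finset.range (q.1.leftBranch + 1), (X : Polynomial ℤ) ^ (p.1.leftBranch + k + 1))
      = ∑ x ∈ (Finset.HasAntidiagonal.antidiagonal n).sigma (fun ij => ((F ij.1) ×ˢ (F ij.2)).sigma
            (fun pq => Finset.range (pq.2.1.leftBranch + 1))),
          (X : Polynomial ℤ) ^ (x.2.1.1.1.leftBranch + x.2.2 + 1) from ?_]
  · symm
    apply Finset.sum_bij
      (i := fun x _ => (ins x.2.2 x.2.1.1.1 x.2.1.2.1, node x.2.1.1.2 x.2.1.2.2))
    · rintro ⟨⟨i, j⟩, ⟨p, q⟩, k⟩ hx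
      simp only [Finset.mem_sigma, Finset.HasAntidiagonal.mem_antidiagonal, Finset.mem_product,
        Finset.mem_range, mem_F] at hx
      obtain ⟨hij, ⟨⟨hple, hps⟩, hqle, hqs⟩, hkr⟩ := hx
      have hk : k ≤ q.1.leftBranch := by omega
      refine mem_F.2 ⟨ins_le hk hple hqle, ?_⟩
      dsimp only
      rw [size_ins]; omega
    · rintro ⟨⟨i, j⟩, ⟨p, q⟩, k⟩ hx ⟨⟨i', j'⟩, ⟨p', q'⟩, k'⟩ hx' he
      simp only [Finset.mem_sigma, Finset.mem_antidiagonal, Finset.mem_product,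
        Finset.mem_range, mem_F] at hx hx'
      obtain ⟨hij, ⟨⟨hple, hps⟩, hqle, hqs⟩, hkr⟩ := hx
      obtain ⟨hij', ⟨⟨hple', hps'⟩, hqle', hqs'⟩, hkr'⟩ := hx'
      simp only [Prod.mk.injEq, node.injEq] at he
      obtain ⟨hins, h2, h4⟩ := he
      have hsz : p.1.size = p'.1.size := by
        rw [size_le hple, size_le hple', h2]
      obtain ⟨hke, hpe, hqe⟩ := ins_inj (by omega) (by omega) hsz hins
      have : p = p' := Prod.ext hpe h2
      have : q = q' := Prod.ext hqe h4
      simp_all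
    · rintro ⟨T1, T2⟩ hb
      obtain ⟨hle, hsz⟩ := mem_F.1 hb
      cases T2 with
      | leaf =>
        have := size_le hle
        simp [size, hsz] at this
      | node A B =>
        obtain ⟨k, P, Q, hk, rfl, hPA, hQB⟩ := decomp hle
        have hsz' : P.size + Q.size + 1 = n + 1 := by rw [← size_ins k P Q, hsz]
        refine ⟨⟨(P.size, Q.size), ⟨(P, A), (Q, B)⟩, k⟩, ?_, rfl⟩
        simp only [Finset.mem_sigma, Finset.HasAntidiagonal.mem_antidiagonal, Finset.mem_product,
          Finset.mem_range, mem_F]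
        exact ⟨by omega, ⟨⟨hPA, trivial⟩, hQB, trivial⟩, by omega⟩
    · rintro ⟨⟨i, j⟩, ⟨p, q⟩, k⟩ hx
      simp only [Finset.mem_sigma, Finset.mem_antidiagonal, Finset.mem_product,
        Finset.mem_range, mem_F] at hx
      obtain ⟨hij, ⟨⟨hple, hps⟩, hqle, hqs⟩, hkr⟩ := hx
      have hk : k ≤ q.1.leftBranch := by omega
      show (X : Polynomial ℤ) ^ (p.1.leftBranch + k + 1) = _
      rw [lb_ins _ hk]
  · rw [Finset.sum_sigma]
    refine Finset.sum_congr rfl fun ij _ => ?_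
    rw [Finset.sum_sigma, Finset.sum_product]

end Tree0

lemma deltaPoly_eq_of {p q : Polynomial ℤ}
    (h : (X - C 1) * q = X * p - C (p.eval 1)) : deltaPoly p = q := by
  unfold deltaPoly
  rw [← h, Polynomial.mul_divByMonic_cancel_left _ (monic_X_sub_C 1)]

lemma deltaPoly_sum {α : Type*} (s : Finset α) (m : α → ℕ) :
    deltaPoly (∑ a ∈ s, (X : Polynomial ℤ) ^ m a)
      = ∑ a ∈ s, ∑ k ∈ Finset.range (m a + 1), (X : Polynomial ℤ) ^ k := by
  apply deltaPoly_eq_of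
  have heval : (∑ a ∈ s, (X : Polynomial ℤ) ^ m a).eval 1 = (s.card : ℤ) := by
    rw [Polynomial.eval_finset_sum]
    simp
  rw [heval, Finset.mul_sum, Finset.mul_sum]
  have hterm : ∀ a, ((X : Polynomial ℤ) - C 1) * ∑ k ∈ Finset.range (m a + 1), (X : Polynomial ℤ) ^ k
      = X ^ (m a + 1) - 1 := by
    intro a
    rw [C_1, mul_comm, geom_sum_mul]
  simp_rw [hterm]
  rw [Finset.sum_sub_distrib]
  congr 1
  · exact Finset.sum_congr rfl fun a _ => by rw [pow_succ, mul_comm]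
  · rw [Finset.sum_const, nsmul_eq_mul, mul_one]
    rfl

lemma Tree0.size_zero {T : Tree0} (h : T.size = 0) : T = Tree0.leaf := by
  cases T with
  | leaf => rfl
  | node l r => simp [Tree0.size] at h

lemma Tree0.F_zero : Tree0.F 0 = {(Tree0.leaf, Tree0.leaf)} := by
  ext p
  simp only [Tree0.mem_F, Finset.mem_singleton]
  constructor
  · rintro ⟨hle, hsz⟩
    have h1 := Tree0.size_zero hsz
    have h2 : p.2 = Tree0.leaf := by
      apply Tree0.size_zero
      rw [← Tree0.size_le hle, hsz]
    exact Prod.ext h1 h2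
  · rintro rfl
    exact ⟨Tree0.le_refl _, rfl⟩

/-- The generating function `Φ(x,y) = Σ_{[T₁,T₂]} x^{m(T₁)} y^{|T₁|}`
over intervals of the Tamari lattice (`m(T₁)` = number of nodes on the leftmost branch
of the smaller tree) satisfies `Φ = 1 + x·y·Φ·(xΦ − Φ(1,y))/(x−1)`. -/
theorem tamari_interval_functional_equation (Φ : PowerSeries (Polynomial ℤ))
    (hΦ : ∀ n m : ℕ,
      (PowerSeries.coeff n Φ).coeff m =
        (Set.ncard {p : Tree0 × Tree0 |
            Tree0.tamariLE p.1 p.2 ∧ p.1.size = n ∧ p.1.leftBranch = m} : ℤ)) :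
    Φ = 1 + (PowerSeries.C (Polynomial.X : Polynomial ℤ)) * PowerSeries.X * Φ
          * deltaS Φ := by
  classical
  have key1 : ∀ n, PowerSeries.coeff n Φ
      = ∑ p ∈ Tree0.F n, (X : Polynomial ℤ) ^ p.1.leftBranch := by
    intro n
    ext m
    rw [hΦ n m, Polynomial.finset_sum_coeff]
    have hset : {p : Tree0 × Tree0 | Tree0.tamariLE p.1 p.2 ∧ p.1.size = n ∧ p.1.leftBranch = m}
        = ↑((Tree0.F n).filter (fun p => p.1.leftBranch = m)) := by
      ext p
      simp [Tree0.mem_F, and_assoc]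
    rw [hset, Set.ncard_coe_finset]
    simp only [Polynomial.coeff_X_pow]
    rw [Finset.sum_boole]
    congr 2
    apply Finset.filter_congr
    intro p _
    simp [eq_comm]
  refine PowerSeries.ext fun n => ?_
  cases n with
  | zero =>
    rw [map_add, key1 0, Tree0.F_zero]
    simp [PowerSeries.coeff_zero_eq_constantCoeff, map_mul, PowerSeries.constantCoeff_X,
      Tree0.leftBranch]
  | succ n =>
    rw [map_add]
    have hone : PowerSeries.coeff (n + 1) (1 : PowerSeries (Polynomial ℤ)) = 0 := by
      simp [PowerSeries.coeff_one]
    have hre : (PowerSeries.C (Polynomial.X : Polynomial ℤ)) * PowerSeries.X * Φ * deltaS Φ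
        = (PowerSeries.C (Polynomial.X : Polynomial ℤ)) * (PowerSeries.X * (Φ * deltaS Φ)) := by
      ring
    rw [hone, zero_add, hre, PowerSeries.coeff_C_mul, PowerSeries.coeff_succ_X_mul,
      PowerSeries.coeff_mul]
    simp only [deltaS, PowerSeries.coeff_mk]
    simp_rw [key1]
    simp_rw [deltaPoly_sum]
    rw [Tree0.sum_decomp n, Finset.mul_sum]
    refine Finset.sum_congr rfl fun ij _ => ?_
    rw [Finset.sum_mul_sum]
    simp_rw [Finset.mul_sum]
    exact Finset.sum_congr rfl fun p _ => Finset.sum_congr rfl fun q _ =>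
      Finset.sum_congr rfl fun k _ => by ring
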